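/- (Lemma 5.6, covariance decay of the truncated kernel.) Under Assumption HYP, there exists a constant C > 0 such that for every M ≥ 1, |Cov(h̄_M(ξ₁,ξ₂), h̄_M(ξ₁,ξ₃))| ≤ C·M^{2 − 3β/2}, where h̄_M(x,y) := h(x,y)·1_{|h(x,y)| ≤ M} and ξ₁, ξ₂, ξ₃ are i.i.d. -/

import Mathlib

open MeasureTheory ProbabilityTheory Filter Topology Set

/-- Assumption HYP of Franke–Pène–Wendler, stated for the common law `μ` of the i.i.d.
scenery: items (i)–(vii). -/
structure HypHYP {E : Type*} [MeasurableSpace E] (μ : Measure E) (h : E → E → ℝ)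
    (β c₀ c₁ : ℝ) : Prop where
  beta_mem : β ∈ Set.Ioo (0:ℝ) 2
  diag : ∀ x, h x x = 0
  symm : ∀ x y, h x y = h y x
  c₀_nonneg : 0 ≤ c₀
  c₁_nonneg : 0 ≤ c₁
  c_pos : 0 < c₀ + c₁
  tail_pos : Filter.Tendsto
    (fun z : ℝ => z ^ β * ((μ.prod μ) {p : E × E | z ≤ h p.1 p.2}).toReal)
      Filter.atTop (nhds c₀)
  tail_neg : Filter.Tendsto
    (fun z : ℝ => z ^ β * ((μ.prod μ) {p : E × E | h p.1 p.2 ≤ -z}).toReal)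
      Filter.atTop (nhds c₁)
  pair_tail : ∃ C₀ > (0:ℝ), ∃ γ > 3*β/4, ∀ z z' : ℝ, 0 < z → 0 < z' →
      ((μ.prod (μ.prod μ))
          {p : E × E × E | z ≤ |h p.1 p.2.1| ∧ z' ≤ |h p.1 p.2.2|}).toReal
        ≤ C₀ * (max 1 z * max 1 z') ^ (-γ)
  mean_zero : 1 < β → ∫ p : E × E, h p.1 p.2 ∂(μ.prod μ) = 0
  corr_bound : 4/3 ≤ β → ∃ C₀' > (0:ℝ), ∃ θ' > 3*β/4 - 1, ∀ M M' : ℝ, 0 < M → 0 < M' →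
      |∫ p : E × E × E,
          ((if |h p.1 p.2.1| ≤ M then h p.1 p.2.1 else 0) + β/(β-1)*(c₀-c₁)*M^(1-β)) *
          ((if |h p.1 p.2.2| ≤ M' then h p.1 p.2.2 else 0) + β/(β-1)*(c₀-c₁)*M'^(1-β))
        ∂(μ.prod (μ.prod μ))|
        ≤ C₀' * (M*M') ^ (-θ')
  beta_one : β = 1 → c₀ = c₁ ∧
      Filter.Tendsto (fun M : ℝ => ∫ p : E × E,
        (if |h p.1 p.2| ≤ M then h p.1 p.2 else 0) ∂(μ.prod μ)) Filter.atTop (nhds 0)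


/-- ∫_{(0,M)} s^{-q} ds ≤ M^{1-q}/(1-q) for 0 ≤ q < 1. -/
lemma lint_rpow_Ioo {q M : ℝ} (hq0 : 0 ≤ q) (hq1 : q < 1) (hM : 1 ≤ M) :
    ∫⁻ s in Ioo (0:ℝ) M, ENNReal.ofReal (s ^ (-q)) ≤ ENNReal.ofReal (M ^ (1-q) / (1-q)) := by
  have hM0 : (0:ℝ) ≤ M := by linarith
  have hii : IntervalIntegrable (fun x : ℝ => x ^ (-q)) volume 0 M :=
    intervalIntegral.intervalIntegrable_rpow' (by linarith)
  have hInt : IntegrableOn (fun x : ℝ => x ^ (-q)) (Ioo 0 M) volume :=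
    ((intervalIntegrable_iff_integrableOn_Ioc_of_le hM0).1 hii).mono_set Ioo_subset_Ioc_self
  have hnn : 0 ≤ᵐ[volume.restrict (Ioo (0:ℝ) M)] fun x : ℝ => x ^ (-q) :=
    (ae_restrict_mem measurableSet_Ioo).mono fun x hx => Real.rpow_nonneg hx.1.le _
  rw [← ofReal_integral_eq_lintegral_ofReal hInt hnn]
  apply ENNReal.ofReal_le_ofReal
  have h1 : ∫ s in Ioo (0:ℝ) M, s ^ (-q) = ∫ s in (0:ℝ)..M, s ^ (-q) := by
    rw [intervalIntegral.integral_of_le hM0, integral_Ioc_eq_integral_Ioo]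
  rw [h1, integral_rpow (Or.inl (by linarith))]
  rw [Real.zero_rpow (by linarith : -q + 1 ≠ 0)]
  have : -q + 1 = 1 - q := by ring
  rw [this, sub_zero]

/-- max version -/
lemma lint_rpow_max_Ioo {q M : ℝ} (hq0 : 0 ≤ q) (hq1 : q < 1) (hM : 1 ≤ M) :
    ∫⁻ s in Ioo (0:ℝ) M, ENNReal.ofReal ((max 1 s) ^ (-q)) ≤ ENNReal.ofReal (M ^ (1-q) / (1-q)) := by
  refine le_trans (setLIntegral_mono (by fun_prop) ?_) (lint_rpow_Ioo hq0 hq1 hM)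
  intro x hx
  apply ENNReal.ofReal_le_ofReal
  rcases le_total x 1 with hx1 | hx1
  · rw [max_eq_left hx1, Real.one_rpow]
    exact Real.one_le_rpow_of_pos_of_le_one_of_nonpos hx.1 hx1 (by linarith)
  · rw [max_eq_right hx1]

lemma tail_bd {E : Type*} [MeasurableSpace E] (μ : Measure E) [IsProbabilityMeasure μ]
    (h : E → E → ℝ) (β c₀ c₁ : ℝ) (hβ : 0 < β) (hc₀ : 0 ≤ c₀) (hc₁ : 0 ≤ c₁)
    (tp : Tendsto (fun z : ℝ => z ^ β * ((μ.prod μ) {p : E × E | z ≤ h p.1 p.2}).toReal)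
      atTop (nhds c₀))
    (tn : Tendsto (fun z : ℝ => z ^ β * ((μ.prod μ) {p : E × E | h p.1 p.2 ≤ -z}).toReal)
      atTop (nhds c₁)) :
    ∃ K : ℝ, 1 ≤ K ∧ ∀ z : ℝ, 0 < z →
      (μ.prod μ) {p : E × E | z ≤ |h p.1 p.2|} ≤ ENNReal.ofReal (K * (max 1 z) ^ (-β)) := by
  have e1 : ∀ᶠ z in atTop, z ^ β * ((μ.prod μ) {p : E × E | z ≤ h p.1 p.2}).toReal ≤ c₀ + 1 :=
    tp.eventually (eventually_le_nhds (lt_add_one c₀))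
  have e2 : ∀ᶠ z in atTop, z ^ β * ((μ.prod μ) {p : E × E | h p.1 p.2 ≤ -z}).toReal ≤ c₁ + 1 :=
    tn.eventually (eventually_le_nhds (lt_add_one c₁))
  obtain ⟨z₀, hz₀⟩ := eventually_atTop.1 (e1.and e2)
  set z₁ : ℝ := max 1 z₀ with hz₁def
  have hz₁1 : (1:ℝ) ≤ z₁ := le_max_left _ _
  have hz₁0 : (0:ℝ) < z₁ := by linarith
  have hz₁b : (1:ℝ) ≤ z₁ ^ β := Real.one_le_rpow hz₁1 hβ.le
  refine ⟨(c₀ + c₁ + 2) * z₁ ^ β, by nlinarith, ?_⟩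
  intro z hz
  rcases le_total z₁ z with hzz | hzz
  · -- large z
    have hz1 : (1:ℝ) ≤ z := le_trans hz₁1 hzz
    have hmax : max 1 z = z := max_eq_right hz1
    obtain ⟨hb1, hb2⟩ := hz₀ z (le_trans (le_max_right 1 z₀) hzz)
    have hzb : (0:ℝ) < z ^ β := Real.rpow_pos_of_pos hz _
    have key : ∀ (S : Set (E × E)) (c : ℝ), z ^ β * ((μ.prod μ) S).toReal ≤ c →
        (μ.prod μ) S ≤ ENNReal.ofReal (c * z ^ (-β)) := by
      intro S c hS
      rw [← ENNReal.ofReal_toReal (measure_ne_top (μ.prod μ) S)]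
      apply ENNReal.ofReal_le_ofReal
      rw [Real.rpow_neg hz.le, mul_comm c, inv_mul_eq_div, le_div_iff₀ hzb]
      linarith
    have hsub : {p : E × E | z ≤ |h p.1 p.2|} ⊆
        {p : E × E | z ≤ h p.1 p.2} ∪ {p : E × E | h p.1 p.2 ≤ -z} := by
      intro p hp
      simp only [mem_setOf_eq, mem_union] at hp ⊢
      rcases le_or_gt 0 (h p.1 p.2) with hh | hh
      · left; rwa [abs_of_nonneg hh] at hp
      · right; rw [abs_of_neg hh] at hp; linarith
    refine le_trans (measure_mono hsub) (le_trans (measure_union_le _ _) ?_)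
    refine le_trans (add_le_add (key _ _ hb1) (key _ _ hb2)) ?_
    rw [← ENNReal.ofReal_add (by positivity) (by positivity)]
    apply ENNReal.ofReal_le_ofReal
    rw [hmax]
    have hzneg : (0:ℝ) ≤ z ^ (-β) := Real.rpow_nonneg hz.le _
    nlinarith [mul_nonneg (mul_nonneg (by linarith : (0:ℝ) ≤ c₀+c₁+2) hzneg)
      (by linarith : (0:ℝ) ≤ z₁ ^ β - 1)]
  · -- small z : measure ≤ 1
    refine le_trans prob_le_one ?_
    rw [show (1:ENNReal) = ENNReal.ofReal 1 by simp]
    apply ENNReal.ofReal_le_ofReal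
    have hmz1 : (1:ℝ) ≤ max 1 z := le_max_left _ _
    have hmzle : max 1 z ≤ z₁ := max_le hz₁1 hzz
    have h2 : z₁ ^ (-β) ≤ (max 1 z) ^ (-β) :=
      Real.rpow_le_rpow_of_nonpos (by linarith) hmzle (by linarith)
    have h3 : z₁ ^ β * z₁ ^ (-β) = 1 := by
      rw [← Real.rpow_add hz₁0]; simp
    have h4 : (0:ℝ) ≤ z₁ ^ β := by linarith
    nlinarith [mul_le_mul_of_nonneg_left h2 (mul_nonneg (by linarith : (0:ℝ) ≤ c₀+c₁+2) h4),
      mul_nonneg h4 (Real.rpow_nonneg (le_of_lt hz₁0) (-β))]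

/-- generic: expectation of |f| via tails, bounded case -/
lemma int_abs_le_of_tail {α : Type*} [MeasurableSpace α] (P : Measure α) [IsProbabilityMeasure P]
    {f : α → ℝ} (hf : Measurable f) {M K q : ℝ} (hM : 1 ≤ M) (hK : 0 ≤ K) (hq0 : 0 ≤ q)
    (hq1 : q < 1) (hbdd : ∀ a, |f a| ≤ M)
    (htail : ∀ t : ℝ, 0 < t → t < M → P {a | t < |f a|} ≤ ENNReal.ofReal (K * (max 1 t) ^ (-q))) :
    ∫ a, |f a| ∂P ≤ K * (M ^ (1-q) / (1-q)) := by
  have habs : Measurable fun a => |f a| := hf.abs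
  have h1 : ∫ a, |f a| ∂P = (∫⁻ a, ENNReal.ofReal (|f a|) ∂P).toReal :=
    integral_eq_lintegral_of_nonneg_ae (ae_of_all _ fun a => abs_nonneg _)
      habs.aestronglyMeasurable
  have h2 : ∫⁻ a, ENNReal.ofReal (|f a|) ∂P = ∫⁻ t in Ioi (0:ℝ), P {a | t < |f a|} :=
    lintegral_eq_lintegral_meas_lt P (ae_of_all _ fun a => abs_nonneg _) habs.aemeasurable
  have hindmeas : Measurable fun t : ℝ =>
      (Ioo (0:ℝ) M).indicator (fun t => ENNReal.ofReal (K * (max 1 t) ^ (-q))) t := by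
    apply Measurable.indicator ?_ measurableSet_Ioo
    fun_prop
  have h3 : ∫⁻ t in Ioi (0:ℝ), P {a | t < |f a|}
      ≤ ∫⁻ t in Ioi (0:ℝ),
        (Ioo (0:ℝ) M).indicator (fun t => ENNReal.ofReal (K * (max 1 t) ^ (-q))) t := by
    refine setLIntegral_mono hindmeas ?_
    intro t ht
    rcases lt_or_ge t M with htM | htM
    · have htmem : t ∈ Ioo (0:ℝ) M := ⟨ht, htM⟩
      rw [indicator_of_mem htmem]
      exact htail t ht htM
    · have : {a | t < |f a|} = ∅ := by
        ext a; simp only [mem_setOf_eq, mem_empty_iff_false, iff_false, not_lt]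
        exact le_trans (hbdd a) htM
      rw [this, measure_empty]
      exact zero_le
  have h4 : ∫⁻ t in Ioi (0:ℝ),
      (Ioo (0:ℝ) M).indicator (fun t => ENNReal.ofReal (K * (max 1 t) ^ (-q))) t
      ≤ ENNReal.ofReal (K * (M ^ (1-q) / (1-q))) := by
    rw [setLIntegral_eq_of_support_subset ?hsupp]
    case hsupp =>
      refine subset_trans support_indicator_subset ?_
      exact fun t ht => ht.1
    rw [lintegral_indicator measurableSet_Ioo]
    calc ∫⁻ t in Ioo (0:ℝ) M, ENNReal.ofReal (K * (max 1 t) ^ (-q))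
        = ∫⁻ t in Ioo (0:ℝ) M, ENNReal.ofReal K * ENNReal.ofReal ((max 1 t) ^ (-q)) := by
          congr 1; ext t; rw [ENNReal.ofReal_mul hK]
      _ = ENNReal.ofReal K * ∫⁻ t in Ioo (0:ℝ) M, ENNReal.ofReal ((max 1 t) ^ (-q)) := by
          rw [lintegral_const_mul]; fun_prop
      _ ≤ ENNReal.ofReal K * ENNReal.ofReal (M ^ (1-q) / (1-q)) := by
          exact mul_le_mul_right (lint_rpow_max_Ioo hq0 hq1 hM) _
      _ = ENNReal.ofReal (K * (M ^ (1-q) / (1-q))) := (ENNReal.ofReal_mul hK).symm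
  rw [h1, h2] at *
  calc (∫⁻ t in Ioi (0:ℝ), P {a | t < |f a|}).toReal
      ≤ (ENNReal.ofReal (K * (M ^ (1-q) / (1-q)))).toReal :=
        ENNReal.toReal_mono ENNReal.ofReal_ne_top (le_trans h3 h4)
    _ = K * (M ^ (1-q) / (1-q)) := ENNReal.toReal_ofReal
        (mul_nonneg hK (div_nonneg (Real.rpow_nonneg (by linarith) _) (by linarith)))

lemma int_abs_le_of_tail_top {α : Type*} [MeasurableSpace α] (P : Measure α)
    [IsProbabilityMeasure P] {f : α → ℝ} (hf : Measurable f) {M K b : ℝ}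
    (hM : 1 ≤ M) (hK : 0 ≤ K) (hb : 1 < b)
    (htail : ∀ t : ℝ, 0 < t → P {a | t < |f a|} ≤ ENNReal.ofReal (K * (max M t) ^ (-b))) :
    Integrable f P ∧ ∫ a, |f a| ∂P ≤ K * M ^ (1-b) + K * (M ^ (1-b) / (b-1)) := by
  have hM0 : (0:ℝ) < M := by linarith
  have habs : Measurable fun a => |f a| := hf.abs
  have h2 : ∫⁻ a, ENNReal.ofReal (|f a|) ∂P = ∫⁻ t in Ioi (0:ℝ), P {a | t < |f a|} :=
    lintegral_eq_lintegral_meas_lt P (ae_of_all _ fun a => abs_nonneg _) habs.aemeasurable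
  have hsplit : ∫⁻ t in Ioi (0:ℝ), P {a | t < |f a|}
      = (∫⁻ t in Ioc (0:ℝ) M, P {a | t < |f a|}) + ∫⁻ t in Ioi M, P {a | t < |f a|} := by
    rw [← Ioc_union_Ioi_eq_Ioi hM0.le, lintegral_union measurableSet_Ioi]
    rw [Set.disjoint_left]
    intro t ht1 ht2
    exact absurd ht1.2 (not_le.mpr ht2)
  have hp1 : ∫⁻ t in Ioc (0:ℝ) M, P {a | t < |f a|} ≤ ENNReal.ofReal (K * M ^ (1-b)) := by
    have : ∫⁻ t in Ioc (0:ℝ) M, P {a | t < |f a|}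
        ≤ ∫⁻ _ in Ioc (0:ℝ) M, ENNReal.ofReal (K * M ^ (-b)) := by
      refine setLIntegral_mono measurable_const ?_
      intro t ht
      have := htail t ht.1
      rwa [max_eq_left ht.2] at this
    refine le_trans this ?_
    rw [setLIntegral_const, Real.volume_Ioc, sub_zero,
      ← ENNReal.ofReal_mul (by positivity)]
    apply ENNReal.ofReal_le_ofReal
    rw [show (1:ℝ)-b = -b+1 by ring, Real.rpow_add_one (ne_of_gt hM0)]
    ring_nf
    exact le_refl _
  have hp2 : ∫⁻ t in Ioi M, P {a | t < |f a|} ≤ ENNReal.ofReal (K * (M ^ (1-b) / (b-1))) := by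
    have hint : IntegrableOn (fun t : ℝ => K * t ^ (-b)) (Ioi M) volume :=
      (integrableOn_Ioi_rpow_of_lt (by linarith) hM0).const_mul K
    have h1 : ∫⁻ t in Ioi M, P {a | t < |f a|}
        ≤ ∫⁻ t in Ioi M, ENNReal.ofReal (K * t ^ (-b)) := by
      refine setLIntegral_mono (by fun_prop) ?_
      intro t ht
      have := htail t (lt_trans hM0 ht)
      rwa [max_eq_right (le_of_lt ht)] at this
    refine le_trans h1 ?_
    rw [← ofReal_integral_eq_lintegral_ofReal hint
      ((ae_restrict_mem measurableSet_Ioi).mono fun t ht =>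
        mul_nonneg hK (Real.rpow_nonneg (le_of_lt (lt_trans hM0 ht)) _))]
    apply ENNReal.ofReal_le_ofReal
    rw [integral_const_mul, integral_Ioi_rpow_of_lt (by linarith) hM0]
    rw [show -b+1 = 1-b by ring, neg_div, ← div_neg, neg_sub]
  have key : ∫⁻ a, ENNReal.ofReal (|f a|) ∂P
      ≤ ENNReal.ofReal (K * M ^ (1-b)) + ENNReal.ofReal (K * (M ^ (1-b) / (b-1))) := by
    rw [h2, hsplit]; exact add_le_add hp1 hp2
  have hfin : Integrable f P := by
    refine ⟨hf.aestronglyMeasurable, ?_⟩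
    rw [hasFiniteIntegral_iff_norm]
    simp only [Real.norm_eq_abs]
    exact lt_of_le_of_lt key (by finiteness)
  refine ⟨hfin, ?_⟩
  have h1 : ∫ a, |f a| ∂P = (∫⁻ a, ENNReal.ofReal (|f a|) ∂P).toReal :=
    integral_eq_lintegral_of_nonneg_ae (ae_of_all _ fun a => abs_nonneg _)
      habs.aestronglyMeasurable
  have hn1 : 0 ≤ K * M ^ (1-b) := mul_nonneg hK (Real.rpow_nonneg hM0.le _)
  have hn2 : 0 ≤ K * (M ^ (1-b) / (b-1)) :=
    mul_nonneg hK (div_nonneg (Real.rpow_nonneg hM0.le _) (by linarith))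
  rw [h1]
  calc (∫⁻ a, ENNReal.ofReal (|f a|) ∂P).toReal
      ≤ (ENNReal.ofReal (K * M ^ (1-b) + K * (M ^ (1-b) / (b-1)))).toReal := by
        apply ENNReal.toReal_mono ENNReal.ofReal_ne_top
        rwa [ENNReal.ofReal_add hn1 hn2]
    _ ≤ K * M ^ (1-b) + K * (M ^ (1-b) / (b-1)) := le_of_eq (ENNReal.toReal_ofReal (add_nonneg hn1 hn2))
lemma lint_prod_tail {Ω : Type*} [MeasurableSpace Ω] (ν : Measure Ω) [IsFiniteMeasure ν]
    {F G : Ω → ℝ} (hF : Measurable F) (hG : Measurable G)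
    {M C₀ g : ℝ} (hM : 1 ≤ M) (hC₀ : 0 ≤ C₀) (hg0 : 0 < g) (hg1 : g < 1)
    (hF0 : ∀ p, 0 ≤ F p) (hG0 : ∀ p, 0 ≤ G p) (hFM : ∀ p, F p ≤ M) (hGM : ∀ p, G p ≤ M)
    (htail : ∀ s t : ℝ, 0 < s → 0 < t →
      ν {p | s < F p ∧ t < G p} ≤ ENNReal.ofReal (C₀ * (s ^ (-g) * t ^ (-g)))) :
    ∫⁻ p, ENNReal.ofReal (F p * G p) ∂ν
      ≤ ENNReal.ofReal C₀ * (ENNReal.ofReal (M ^ (1-g) / (1-g)))^2 := by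
  set A : Set ((ℝ × ℝ) × Ω) :=
    {q | 0 < q.1.1 ∧ q.1.1 < F q.2 ∧ 0 < q.1.2 ∧ q.1.2 < G q.2} with hAdef
  have hA : MeasurableSet A := by
    apply MeasurableSet.inter
    · exact measurableSet_lt measurable_const (measurable_fst.fst)
    apply MeasurableSet.inter
    · exact measurableSet_lt (measurable_fst.fst) (hF.comp measurable_snd)
    apply MeasurableSet.inter
    · exact measurableSet_lt measurable_const (measurable_fst.snd)
    · exact measurableSet_lt (measurable_fst.snd) (hG.comp measurable_snd)
  have step1 : ∀ p, ENNReal.ofReal (F p * G p)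
      = ((volume : Measure ℝ).prod volume) ((fun q : ℝ × ℝ => (q, p)) ⁻¹' A) := by
    intro p
    have hset : (fun q : ℝ × ℝ => (q, p)) ⁻¹' A = Ioo 0 (F p) ×ˢ Ioo 0 (G p) := by
      ext q
      simp only [hAdef, mem_preimage, mem_setOf_eq, mem_prod, mem_Ioo]
      tauto
    rw [hset, Measure.prod_prod, Real.volume_Ioo, Real.volume_Ioo, sub_zero, sub_zero,
      ← ENNReal.ofReal_mul (hF0 p)]
  have step3 : ∫⁻ p, ENNReal.ofReal (F p * G p) ∂ν
      = ∫⁻ q : ℝ × ℝ, ν (Prod.mk q ⁻¹' A) ∂((volume : Measure ℝ).prod volume) := by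
    calc ∫⁻ p, ENNReal.ofReal (F p * G p) ∂ν
        = ∫⁻ p, ((volume : Measure ℝ).prod volume) ((fun q : ℝ × ℝ => (q, p)) ⁻¹' A) ∂ν := by
          exact lintegral_congr step1
      _ = (((volume : Measure ℝ).prod volume).prod ν) A := (Measure.prod_apply_symm hA).symm
      _ = ∫⁻ q : ℝ × ℝ, ν (Prod.mk q ⁻¹' A) ∂((volume : Measure ℝ).prod volume) :=
          Measure.prod_apply hA
  rw [step3]
  have step4 : ∀ q : ℝ × ℝ, ν (Prod.mk q ⁻¹' A)
      ≤ (Ioo (0:ℝ) M ×ˢ Ioo (0:ℝ) M).indicator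
        (fun q : ℝ × ℝ => ENNReal.ofReal C₀ *
          (ENNReal.ofReal (q.1 ^ (-g)) * ENNReal.ofReal (q.2 ^ (-g)))) q := by
    intro q
    by_cases hq : q ∈ Ioo (0:ℝ) M ×ˢ Ioo (0:ℝ) M
    · rw [indicator_of_mem hq]
      obtain ⟨⟨hq1, _⟩, ⟨hq2, _⟩⟩ := hq
      have hsub : Prod.mk q ⁻¹' A ⊆ {p | q.1 < F p ∧ q.2 < G p} := by
        intro p hp
        exact ⟨hp.2.1, hp.2.2.2⟩
      refine le_trans (measure_mono hsub) (le_trans (htail q.1 q.2 hq1 hq2) ?_)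
      rw [ENNReal.ofReal_mul hC₀, ENNReal.ofReal_mul (Real.rpow_nonneg hq1.le _)]
    · rw [indicator_of_notMem hq]
      have : Prod.mk q ⁻¹' A = ∅ := by
        ext p
        simp only [hAdef, mem_preimage, mem_setOf_eq, mem_empty_iff_false, iff_false]
        rintro ⟨h1, h2, h3, h4⟩
        exact hq ⟨⟨h1, lt_of_lt_of_le h2 (hFM p)⟩, ⟨h3, lt_of_lt_of_le h4 (hGM p)⟩⟩
      rw [this, measure_empty]
  refine le_trans (lintegral_mono step4) ?_
  rw [lintegral_indicator (measurableSet_Ioo.prod measurableSet_Ioo)]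
  rw [lintegral_const_mul _ (by fun_prop)]
  have hpm := lintegral_prod_mul (μ := volume.restrict (Ioo (0:ℝ) M))
    (ν := volume.restrict (Ioo (0:ℝ) M))
    (f := fun s : ℝ => ENNReal.ofReal (s ^ (-g)))
    (g := fun s : ℝ => ENNReal.ofReal (s ^ (-g))) (by fun_prop) (by fun_prop)
  rw [← Measure.prod_restrict, hpm, pow_two]
  exact mul_le_mul_right (mul_le_mul' (lint_rpow_Ioo hg0.le hg1 hM) (lint_rpow_Ioo hg0.le hg1 hM)) _
lemma map12 {E : Type*} [MeasurableSpace E] (μ : Measure E) [IsProbabilityMeasure μ] :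
    Measure.map (fun p : E × E × E => (p.1, p.2.1)) (μ.prod (μ.prod μ)) = μ.prod μ := by
  have : (fun p : E × E × E => (p.1, p.2.1)) = Prod.map (id : E → E) Prod.fst := rfl
  rw [this, ← Measure.map_prod_map _ _ measurable_id measurable_fst,
    Measure.map_id, Measure.map_fst_prod]
  simp
lemma map13 {E : Type*} [MeasurableSpace E] (μ : Measure E) [IsProbabilityMeasure μ] :
    Measure.map (fun p : E × E × E => (p.1, p.2.2)) (μ.prod (μ.prod μ)) = μ.prod μ := by
  have : (fun p : E × E × E => (p.1, p.2.2)) = Prod.map (id : E → E) Prod.snd := rfl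
  rw [this, ← Measure.map_prod_map _ _ measurable_id measurable_snd,
    Measure.map_id, Measure.map_snd_prod]
  simp
lemma int_marg1 {E : Type*} [MeasurableSpace E] (μ : Measure E) [IsProbabilityMeasure μ]
    (f : E × E → ℝ) (hf : Measurable f) :
    ∫ p : E × E × E, f (p.1, p.2.1) ∂(μ.prod (μ.prod μ)) = ∫ x, f x ∂(μ.prod μ) := by
  have hφ : Measurable (fun p : E × E × E => (p.1, p.2.1)) :=
    measurable_fst.prodMk measurable_snd.fst
  rw [← map12 μ, integral_map hφ.aemeasurable]
  rw [map12 μ]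
  exact hf.aestronglyMeasurable
lemma int_marg2 {E : Type*} [MeasurableSpace E] (μ : Measure E) [IsProbabilityMeasure μ]
    (f : E × E → ℝ) (hf : Measurable f) :
    ∫ p : E × E × E, f (p.1, p.2.2) ∂(μ.prod (μ.prod μ)) = ∫ x, f x ∂(μ.prod μ) := by
  have hφ : Measurable (fun p : E × E × E => (p.1, p.2.2)) :=
    measurable_fst.prodMk measurable_snd.snd
  rw [← map13 μ, integral_map hφ.aemeasurable]
  rw [map13 μ]
  exact hf.aestronglyMeasurable

lemma max_rpow_le {s g : ℝ} (hs : 0 < s) (hg : 0 ≤ g) : (max 1 s) ^ (-g) ≤ s ^ (-g) := by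
  rcases le_total s 1 with hs1 | hs1
  · rw [max_eq_left hs1, Real.one_rpow]
    exact Real.one_le_rpow_of_pos_of_le_one_of_nonpos hs hs1 (by linarith)
  · rw [max_eq_right hs1]


/-- **Lemma 5.6 (covariance decay of the truncated kernel).**
Under Assumption HYP, `|Cov(h̄_M(ξ₁,ξ₂), h̄_M(ξ₁,ξ₃))| ≤ C M^{2-3β/2}` for `M ≥ 1`,
where `h̄_M = h 1_{|h| ≤ M}` and `ξ₁, ξ₂, ξ₃` are i.i.d. with law `μ`. -/
theorem truncated_kernel_covariance_decay
    {E : Type*} [MeasurableSpace E] (μ : Measure E) [IsProbabilityMeasure μ]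
    (h : E → E → ℝ) (hmeas : Measurable (Function.uncurry h))
    (β c₀ c₁ : ℝ) (hyp : HypHYP μ h β c₀ c₁) :
    ∃ C > (0:ℝ), ∀ M : ℝ, 1 ≤ M →
      |(∫ p : E × E × E,
          (if |h p.1 p.2.1| ≤ M then h p.1 p.2.1 else 0) *
          (if |h p.1 p.2.2| ≤ M then h p.1 p.2.2 else 0) ∂(μ.prod (μ.prod μ))) -
        (∫ p : E × E, (if |h p.1 p.2| ≤ M then h p.1 p.2 else 0) ∂(μ.prod μ)) ^ 2|
      ≤ C * M ^ (2 - 3*β/2) := by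
  obtain ⟨hβ0, hβ2⟩ := hyp.beta_mem
  obtain ⟨K, hK1, hK⟩ := tail_bd μ h β c₀ c₁ hβ0 hyp.c₀_nonneg hyp.c₁_nonneg
    hyp.tail_pos hyp.tail_neg
  have hK0 : (0:ℝ) ≤ K := by linarith
  obtain ⟨C₀, hC₀, γ, hγ, hpair⟩ := hyp.pair_tail
  have hhm : Measurable fun p : E × E => h p.1 p.2 := hmeas
  have hbarm : ∀ M : ℝ, Measurable (fun p : E × E => if |h p.1 p.2| ≤ M then h p.1 p.2 else 0) :=
    fun M => Measurable.ite (measurableSet_le hhm.abs measurable_const) hhm measurable_const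
  have hbar_le : ∀ (M : ℝ), 0 ≤ M →
      ∀ p : E × E, |if |h p.1 p.2| ≤ M then h p.1 p.2 else 0| ≤ M := by
    intro M hM p
    by_cases hp : |h p.1 p.2| ≤ M
    · rwa [if_pos hp]
    · rw [if_neg hp]; simpa using hM
  have hbar_abs : ∀ (M : ℝ) (p : E × E),
      |if |h p.1 p.2| ≤ M then h p.1 p.2 else 0| ≤ |h p.1 p.2| := by
    intro M p
    by_cases hp : |h p.1 p.2| ≤ M
    · rw [if_pos hp]
    · rw [if_neg hp]; simpa using abs_nonneg (h p.1 p.2)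
  -- the one-dimensional truncated tail bound
  have hbar_tail : ∀ (M : ℝ), 1 ≤ M → ∀ q : ℝ, 0 ≤ q → q ≤ β → ∀ t : ℝ, 0 < t → t < M →
      (μ.prod μ) {a : E × E | t < |if |h a.1 a.2| ≤ M then h a.1 a.2 else 0|}
        ≤ ENNReal.ofReal (K * (max 1 t) ^ (-q)) := by
    intro M hM q hq0 hqβ t ht htM
    have hsub : {a : E × E | t < |if |h a.1 a.2| ≤ M then h a.1 a.2 else 0|}
        ⊆ {p : E × E | t ≤ |h p.1 p.2|} := fun a ha =>
      (lt_of_lt_of_le ha (hbar_abs M a)).le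
    refine le_trans (measure_mono hsub) (le_trans (hK t ht) (ENNReal.ofReal_le_ofReal ?_))
    exact mul_le_mul_of_nonneg_left
      (Real.rpow_le_rpow_of_exponent_le (le_max_left 1 t) (by linarith)) hK0
  -- bound on |∫ h̄_M| via crude layer cake, any exponent q ∈ (0,1), q ≤ β
  have hm_bound : ∀ (M : ℝ), 1 ≤ M → ∀ q : ℝ, 0 ≤ q → q < 1 → q ≤ β →
      |∫ p : E × E, (if |h p.1 p.2| ≤ M then h p.1 p.2 else 0) ∂(μ.prod μ)|
        ≤ K * (M ^ (1-q) / (1-q)) := by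
    intro M hM q hq0 hq1 hqβ
    have h1 : |∫ p : E × E, (if |h p.1 p.2| ≤ M then h p.1 p.2 else 0) ∂(μ.prod μ)|
        ≤ ∫ p : E × E, |if |h p.1 p.2| ≤ M then h p.1 p.2 else 0| ∂(μ.prod μ) := by
      simpa [Real.norm_eq_abs] using norm_integral_le_integral_norm (μ := μ.prod μ)
        (fun p : E × E => if |h p.1 p.2| ≤ M then h p.1 p.2 else 0)
    refine le_trans h1 ?_
    exact int_abs_le_of_tail (μ.prod μ) (hbarm M) hM hK0 hq0 hq1
      (hbar_le M (by linarith)) (hbar_tail M hM q hq0 hqβ)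
  -- triple-integral bound, case β < 4/3
  rcases lt_or_ge β (4/3) with hβlow | hβhigh
  · -- low β case
    have hq1 : 3*β/4 < 1 := by linarith
    have hq0 : (0:ℝ) < 3*β/4 := by linarith
    obtain ⟨gm, hgm0, hgm1, hgmγ, hgmq⟩ :
        ∃ gm : ℝ, 0 < gm ∧ gm < 1 ∧ gm ≤ γ ∧ 3*β/4 ≤ gm := by
      have hmin : 3*β/4 < min γ 1 := lt_min hγ hq1
      have h1 := min_le_right γ 1
      have h2 := min_le_left γ 1
      exact ⟨(3*β/4 + min γ 1)/2, by linarith, by linarith, by linarith, by linarith⟩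
    refine ⟨C₀ / (1-gm)^2 + (K / (1-3*β/4))^2,
      add_pos_of_pos_of_nonneg (div_pos hC₀ (pow_pos (by linarith) 2)) (sq_nonneg _), ?_⟩
    intro M hM
    have hM0 : (0:ℝ) < M := by linarith
    -- bound on m²
    have hm := hm_bound M hM (3*β/4) hq0.le hq1 (by linarith)
    have hmsq : (∫ p : E × E, (if |h p.1 p.2| ≤ M then h p.1 p.2 else 0) ∂(μ.prod μ)) ^ 2
        ≤ (K / (1-3*β/4))^2 * M ^ (2 - 3*β/2) := by
      have e1 : (K * (M ^ (1-3*β/4) / (1-3*β/4)))^2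
          = (K / (1-3*β/4))^2 * M ^ (2 - 3*β/2) := by
        have e2 : (M ^ (1-3*β/4))^2 = M ^ (2 - 3*β/2) := by
          rw [← Real.rpow_natCast (M ^ (1-3*β/4)) 2, ← Real.rpow_mul hM0.le]
          norm_num; ring_nf
        calc (K * (M ^ (1-3*β/4) / (1-3*β/4)))^2
            = (K / (1-3*β/4))^2 * (M ^ (1-3*β/4))^2 := by rw [mul_pow, div_pow, div_pow]; ring
          _ = (K / (1-3*β/4))^2 * M ^ (2 - 3*β/2) := by rw [e2]
      rw [← e1]
      calc (∫ p : E × E, (if |h p.1 p.2| ≤ M then h p.1 p.2 else 0) ∂(μ.prod μ)) ^ 2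
          = |∫ p : E × E, (if |h p.1 p.2| ≤ M then h p.1 p.2 else 0) ∂(μ.prod μ)| ^ 2 :=
            (sq_abs _).symm
        _ ≤ (K * (M ^ (1-3*β/4) / (1-3*β/4)))^2 := by
            apply pow_le_pow_left₀ (abs_nonneg _) hm
    -- bound on |T|
    have hT : |∫ p : E × E × E,
          (if |h p.1 p.2.1| ≤ M then h p.1 p.2.1 else 0) *
          (if |h p.1 p.2.2| ≤ M then h p.1 p.2.2 else 0) ∂(μ.prod (μ.prod μ))|
        ≤ C₀ / (1-gm)^2 * M ^ (2 - 3*β/2) := by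
      have hXm : Measurable fun p : E × E × E =>
          (if |h p.1 p.2.1| ≤ M then h p.1 p.2.1 else 0) :=
        (hbarm M).comp (measurable_fst.prodMk measurable_snd.fst)
      have hYm : Measurable fun p : E × E × E =>
          (if |h p.1 p.2.2| ≤ M then h p.1 p.2.2 else 0) :=
        (hbarm M).comp (measurable_fst.prodMk measurable_snd.snd)
      set F : E × E × E → ℝ := fun p => |if |h p.1 p.2.1| ≤ M then h p.1 p.2.1 else 0|
        with hFdef
      set G : E × E × E → ℝ := fun p => |if |h p.1 p.2.2| ≤ M then h p.1 p.2.2 else 0|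
        with hGdef
      have hF : Measurable F := hXm.abs
      have hG : Measurable G := hYm.abs
      have hF0 : ∀ p, 0 ≤ F p := fun p => abs_nonneg _
      have hG0 : ∀ p, 0 ≤ G p := fun p => abs_nonneg _
      have hFM : ∀ p, F p ≤ M := fun p => hbar_le M (by linarith) (p.1, p.2.1)
      have hGM : ∀ p, G p ≤ M := fun p => hbar_le M (by linarith) (p.1, p.2.2)
      have htail2 : ∀ s t : ℝ, 0 < s → 0 < t →
          (μ.prod (μ.prod μ)) {p | s < F p ∧ t < G p}
            ≤ ENNReal.ofReal (C₀ * (s ^ (-gm) * t ^ (-gm))) := by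
        intro s t hs ht
        have hsub : {p : E × E × E | s < F p ∧ t < G p}
            ⊆ {p : E × E × E | s ≤ |h p.1 p.2.1| ∧ t ≤ |h p.1 p.2.2|} := by
          intro p hp
          exact ⟨(lt_of_lt_of_le hp.1 (hbar_abs M (p.1, p.2.1))).le,
            (lt_of_lt_of_le hp.2 (hbar_abs M (p.1, p.2.2))).le⟩
        have hfin := measure_ne_top (μ.prod (μ.prod μ))
          {p : E × E × E | s ≤ |h p.1 p.2.1| ∧ t ≤ |h p.1 p.2.2|}
        have hreal : ((μ.prod (μ.prod μ))
            {p : E × E × E | s ≤ |h p.1 p.2.1| ∧ t ≤ |h p.1 p.2.2|}).toReal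
            ≤ C₀ * (s ^ (-gm) * t ^ (-gm)) := by
          refine le_trans (hpair s t hs ht) ?_
          have h1le : (1:ℝ) ≤ max 1 s * max 1 t := by
            nlinarith [le_max_left (1:ℝ) s, le_max_left (1:ℝ) t]
          have r1 : (max 1 s * max 1 t) ^ (-γ) ≤ (max 1 s * max 1 t) ^ (-gm) :=
            Real.rpow_le_rpow_of_exponent_le h1le (by linarith)
          have r2 : (max 1 s * max 1 t) ^ (-gm)
              = (max 1 s) ^ (-gm) * (max 1 t) ^ (-gm) :=
            Real.mul_rpow (by positivity) (by positivity)
          have r3 : (max 1 s) ^ (-gm) * (max 1 t) ^ (-gm) ≤ s ^ (-gm) * t ^ (-gm) :=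
            mul_le_mul (max_rpow_le hs hgm0.le) (max_rpow_le ht hgm0.le)
              (Real.rpow_nonneg (by positivity) _) (Real.rpow_nonneg hs.le _)
          nlinarith [r1, r3, r2, hC₀]
        calc (μ.prod (μ.prod μ)) {p | s < F p ∧ t < G p}
            ≤ (μ.prod (μ.prod μ))
              {p : E × E × E | s ≤ |h p.1 p.2.1| ∧ t ≤ |h p.1 p.2.2|} := measure_mono hsub
          _ = ENNReal.ofReal (((μ.prod (μ.prod μ))
              {p : E × E × E | s ≤ |h p.1 p.2.1| ∧ t ≤ |h p.1 p.2.2|}).toReal) :=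
              (ENNReal.ofReal_toReal hfin).symm
          _ ≤ ENNReal.ofReal (C₀ * (s ^ (-gm) * t ^ (-gm))) :=
              ENNReal.ofReal_le_ofReal hreal
      have hlint := lint_prod_tail (μ.prod (μ.prod μ)) hF hG hM hC₀.le hgm0 hgm1
        hF0 hG0 hFM hGM htail2
      have step1 : |∫ p : E × E × E,
            (if |h p.1 p.2.1| ≤ M then h p.1 p.2.1 else 0) *
            (if |h p.1 p.2.2| ≤ M then h p.1 p.2.2 else 0) ∂(μ.prod (μ.prod μ))|
          ≤ ∫ p : E × E × E, F p * G p ∂(μ.prod (μ.prod μ)) := by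
        have := norm_integral_le_integral_norm (μ := μ.prod (μ.prod μ))
          (fun p : E × E × E =>
            (if |h p.1 p.2.1| ≤ M then h p.1 p.2.1 else 0) *
            (if |h p.1 p.2.2| ≤ M then h p.1 p.2.2 else 0))
        simp only [Real.norm_eq_abs, abs_mul] at this
        exact this
      have step2 : ∫ p : E × E × E, F p * G p ∂(μ.prod (μ.prod μ))
          = (∫⁻ p, ENNReal.ofReal (F p * G p) ∂(μ.prod (μ.prod μ))).toReal :=
        integral_eq_lintegral_of_nonneg_ae
          (ae_of_all _ fun p => mul_nonneg (hF0 p) (hG0 p))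
          (hF.mul hG).aestronglyMeasurable
      have hBnn : (0:ℝ) ≤ M ^ (1-gm) / (1-gm) :=
        div_nonneg (Real.rpow_nonneg hM0.le _) (by linarith)
      have step3 : (∫⁻ p, ENNReal.ofReal (F p * G p) ∂(μ.prod (μ.prod μ))).toReal
          ≤ C₀ * (M ^ (1-gm) / (1-gm))^2 := by
        calc (∫⁻ p, ENNReal.ofReal (F p * G p) ∂(μ.prod (μ.prod μ))).toReal
            ≤ (ENNReal.ofReal C₀ * (ENNReal.ofReal (M ^ (1-gm) / (1-gm)))^2).toReal := by
              apply ENNReal.toReal_mono ?_ hlint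
              exact ENNReal.mul_ne_top ENNReal.ofReal_ne_top
                (ENNReal.pow_ne_top ENNReal.ofReal_ne_top)
          _ = C₀ * (M ^ (1-gm) / (1-gm))^2 := by
              rw [ENNReal.toReal_mul, ENNReal.toReal_pow, ENNReal.toReal_ofReal hC₀.le,
                ENNReal.toReal_ofReal hBnn]
      have step4 : C₀ * (M ^ (1-gm) / (1-gm))^2 ≤ C₀ / (1-gm)^2 * M ^ (2 - 3*β/2) := by
        have e2 : (M ^ (1-gm))^2 = M ^ (2 - 2*gm) := by
          rw [← Real.rpow_natCast (M ^ (1-gm)) 2, ← Real.rpow_mul hM0.le]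
          congr 1
          push_cast
          ring
        have e3 : M ^ (2 - 2*gm) ≤ M ^ (2 - 3*β/2) :=
          Real.rpow_le_rpow_of_exponent_le hM (by linarith)
        calc C₀ * (M ^ (1-gm) / (1-gm))^2 = C₀ / (1-gm)^2 * (M ^ (1-gm))^2 := by rw [div_pow]; ring
          _ = C₀ / (1-gm)^2 * M ^ (2 - 2*gm) := by rw [e2]
          _ ≤ C₀ / (1-gm)^2 * M ^ (2 - 3*β/2) := by
              apply mul_le_mul_of_nonneg_left e3 (by positivity)
      calc |∫ p : E × E × E,
            (if |h p.1 p.2.1| ≤ M then h p.1 p.2.1 else 0) *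
            (if |h p.1 p.2.2| ≤ M then h p.1 p.2.2 else 0) ∂(μ.prod (μ.prod μ))|
          ≤ ∫ p : E × E × E, F p * G p ∂(μ.prod (μ.prod μ)) := step1
        _ = (∫⁻ p, ENNReal.ofReal (F p * G p) ∂(μ.prod (μ.prod μ))).toReal := step2
        _ ≤ C₀ * (M ^ (1-gm) / (1-gm))^2 := step3
        _ ≤ C₀ / (1-gm)^2 * M ^ (2 - 3*β/2) := step4
    set T := ∫ p : E × E × E,
          (if |h p.1 p.2.1| ≤ M then h p.1 p.2.1 else 0) *
          (if |h p.1 p.2.2| ≤ M then h p.1 p.2.2 else 0) ∂(μ.prod (μ.prod μ)) with hTdef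
    set m := ∫ p : E × E, (if |h p.1 p.2| ≤ M then h p.1 p.2 else 0) ∂(μ.prod μ) with hmdef
    calc |T - m^2| ≤ |T| + |m^2| := by
          rw [sub_eq_add_neg]
          exact le_trans (abs_add_le T (-(m^2))) (by rw [abs_neg])
      _ ≤ C₀ / (1-gm)^2 * M ^ (2 - 3*β/2) + (K / (1-3*β/4))^2 * M ^ (2 - 3*β/2) := by
          refine add_le_add hT ?_
          rw [abs_of_nonneg (sq_nonneg m)]
          exact hmsq
      _ = (C₀ / (1-gm)^2 + (K / (1-3*β/4))^2) * M ^ (2 - 3*β/2) := by ring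
  · -- high β case
    have hβ1 : 1 < β := by linarith
    obtain ⟨C₀', hC₀', θ', hθ', hcorr⟩ := hyp.corr_bound hβhigh
    set Ka : ℝ := |β/(β-1)*(c₀-c₁)| with hKadef
    refine ⟨C₀' + (K + K/(β-1) + Ka)^2 + 1, by
      nlinarith [sq_nonneg (K + K/(β-1) + Ka), hC₀'], ?_⟩
    intro M hM
    have hM0 : (0:ℝ) < M := by linarith
    have hMB : (0:ℝ) < M ^ (1-β) := Real.rpow_pos_of_pos hM0 _
    -- the heavy-tail part g
    have hgfm : Measurable (fun p : E × E =>
        h p.1 p.2 - (if |h p.1 p.2| ≤ M then h p.1 p.2 else 0)) := hhm.sub (hbarm M)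
    have htailg : ∀ t : ℝ, 0 < t → (μ.prod μ)
        {a : E × E | t < |h a.1 a.2 - (if |h a.1 a.2| ≤ M then h a.1 a.2 else 0)|}
          ≤ ENNReal.ofReal (K * (max M t) ^ (-β)) := by
      intro t ht
      have hsub : {a : E × E | t < |h a.1 a.2 - (if |h a.1 a.2| ≤ M then h a.1 a.2 else 0)|}
          ⊆ {p : E × E | max M t ≤ |h p.1 p.2|} := by
        intro a ha
        simp only [Set.mem_setOf_eq] at ha ⊢
        by_cases hle : |h a.1 a.2| ≤ M
        · rw [if_pos hle, sub_self, abs_zero] at ha; linarith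
        · rw [if_neg hle, sub_zero] at ha
          push_neg at hle
          exact max_le hle.le ha.le
      refine le_trans (measure_mono hsub) ?_
      have hmt : (0:ℝ) < max M t := lt_of_lt_of_le hM0 (le_max_left M t)
      refine le_trans (hK (max M t) hmt) (le_of_eq ?_)
      rw [max_eq_right (le_trans hM (le_max_left M t))]
    obtain ⟨hgint, hgbd⟩ := int_abs_le_of_tail_top (μ.prod μ) hgfm hM hK0 hβ1 htailg
    -- integrability of the truncation and of h itself
    have hbarint : Integrable (fun p : E × E =>
        if |h p.1 p.2| ≤ M then h p.1 p.2 else 0) (μ.prod μ) :=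
      (integrable_const M).mono' (hbarm M).aestronglyMeasurable
        (ae_of_all _ fun p => by
          simpa [Real.norm_eq_abs] using hbar_le M (by linarith) p)
    have hhint : Integrable (fun p : E × E => h p.1 p.2) (μ.prod μ) := by
      refine (hbarint.add hgint).congr (ae_of_all _ fun p => ?_)
      simp only [Pi.add_apply]
      ring
    -- the mean of the truncation
    have hmeq : ∫ p : E × E, (if |h p.1 p.2| ≤ M then h p.1 p.2 else 0) ∂(μ.prod μ)
        = - ∫ p : E × E,
            (h p.1 p.2 - (if |h p.1 p.2| ≤ M then h p.1 p.2 else 0)) ∂(μ.prod μ) := by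
      rw [integral_sub hhint hbarint, hyp.mean_zero hβ1, zero_sub, neg_neg]
    have hmabs : |∫ p : E × E, (if |h p.1 p.2| ≤ M then h p.1 p.2 else 0) ∂(μ.prod μ)|
        ≤ K * M ^ (1-β) + K * (M ^ (1-β) / (β-1)) := by
      rw [hmeq, abs_neg]
      refine le_trans ?_ hgbd
      simpa [Real.norm_eq_abs] using norm_integral_le_integral_norm (μ := μ.prod μ)
        (fun p : E × E => h p.1 p.2 - (if |h p.1 p.2| ≤ M then h p.1 p.2 else 0))
    set m := ∫ p : E × E, (if |h p.1 p.2| ≤ M then h p.1 p.2 else 0) ∂(μ.prod μ) with hmdef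
    set aa : ℝ := β/(β-1)*(c₀-c₁)*M^(1-β) with haadef
    have haabs : |aa| = Ka * M ^ (1-β) := by
      rw [haadef, hKadef, abs_mul, abs_of_pos hMB]
    have hma : |m + aa| ≤ (K + K/(β-1) + Ka) * M ^ (1-β) := by
      have e : K * M ^ (1-β) + K * (M ^ (1-β) / (β-1)) + Ka * M ^ (1-β)
          = (K + K/(β-1) + Ka) * M ^ (1-β) := by ring
      calc |m + aa| ≤ |m| + |aa| := abs_add_le m aa
        _ ≤ (K * M ^ (1-β) + K * (M ^ (1-β) / (β-1))) + Ka * M ^ (1-β) := by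
            rw [haabs]; exact add_le_add_left hmabs _
        _ = (K + K/(β-1) + Ka) * M ^ (1-β) := e
    -- integrability on the triple space
    have hXm : Measurable fun p : E × E × E =>
        (if |h p.1 p.2.1| ≤ M then h p.1 p.2.1 else 0) :=
      (hbarm M).comp (measurable_fst.prodMk measurable_snd.fst)
    have hYm : Measurable fun p : E × E × E =>
        (if |h p.1 p.2.2| ≤ M then h p.1 p.2.2 else 0) :=
      (hbarm M).comp (measurable_fst.prodMk measurable_snd.snd)
    have hXb : ∀ p : E × E × E, |if |h p.1 p.2.1| ≤ M then h p.1 p.2.1 else 0| ≤ M :=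
      fun p => hbar_le M (by linarith) (p.1, p.2.1)
    have hYb : ∀ p : E × E × E, |if |h p.1 p.2.2| ≤ M then h p.1 p.2.2 else 0| ≤ M :=
      fun p => hbar_le M (by linarith) (p.1, p.2.2)
    have hXint : Integrable (fun p : E × E × E =>
        if |h p.1 p.2.1| ≤ M then h p.1 p.2.1 else 0) (μ.prod (μ.prod μ)) :=
      (integrable_const M).mono' hXm.aestronglyMeasurable
        (ae_of_all _ fun p => by simpa [Real.norm_eq_abs] using hXb p)
    have hYint : Integrable (fun p : E × E × E =>
        if |h p.1 p.2.2| ≤ M then h p.1 p.2.2 else 0) (μ.prod (μ.prod μ)) :=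
      (integrable_const M).mono' hYm.aestronglyMeasurable
        (ae_of_all _ fun p => by simpa [Real.norm_eq_abs] using hYb p)
    have hXYint : Integrable (fun p : E × E × E =>
        (if |h p.1 p.2.1| ≤ M then h p.1 p.2.1 else 0) *
        (if |h p.1 p.2.2| ≤ M then h p.1 p.2.2 else 0)) (μ.prod (μ.prod μ)) :=
      (integrable_const (M*M)).mono' (hXm.mul hYm).aestronglyMeasurable
        (ae_of_all _ fun p => by
          rw [Real.norm_eq_abs, abs_mul]
          exact mul_le_mul (hXb p) (hYb p) (abs_nonneg _) (by linarith))
    -- marginals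
    have hmarg1 : ∫ p : E × E × E,
        (if |h p.1 p.2.1| ≤ M then h p.1 p.2.1 else 0) ∂(μ.prod (μ.prod μ)) = m :=
      int_marg1 μ (fun q : E × E => if |h q.1 q.2| ≤ M then h q.1 q.2 else 0) (hbarm M)
    have hmarg2 : ∫ p : E × E × E,
        (if |h p.1 p.2.2| ≤ M then h p.1 p.2.2 else 0) ∂(μ.prod (μ.prod μ)) = m :=
      int_marg2 μ (fun q : E × E => if |h q.1 q.2| ≤ M then h q.1 q.2 else 0) (hbarm M)
    -- expansion of the corr-integral
    have hexp : ∫ p : E × E × E,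
        ((if |h p.1 p.2.1| ≤ M then h p.1 p.2.1 else 0) + β/(β-1)*(c₀-c₁)*M^(1-β)) *
        ((if |h p.1 p.2.2| ≤ M then h p.1 p.2.2 else 0) + β/(β-1)*(c₀-c₁)*M^(1-β))
          ∂(μ.prod (μ.prod μ))
        = (∫ p : E × E × E,
            (if |h p.1 p.2.1| ≤ M then h p.1 p.2.1 else 0) *
            (if |h p.1 p.2.2| ≤ M then h p.1 p.2.2 else 0) ∂(μ.prod (μ.prod μ)))
          + aa * m + aa * m + aa^2 := by
      have e : (fun p : E × E × E =>
          ((if |h p.1 p.2.1| ≤ M then h p.1 p.2.1 else 0) + β/(β-1)*(c₀-c₁)*M^(1-β)) *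
          ((if |h p.1 p.2.2| ≤ M then h p.1 p.2.2 else 0) + β/(β-1)*(c₀-c₁)*M^(1-β)))
          = fun p : E × E × E =>
            ((if |h p.1 p.2.1| ≤ M then h p.1 p.2.1 else 0) *
             (if |h p.1 p.2.2| ≤ M then h p.1 p.2.2 else 0)
            + aa * (if |h p.1 p.2.1| ≤ M then h p.1 p.2.1 else 0))
            + (aa * (if |h p.1 p.2.2| ≤ M then h p.1 p.2.2 else 0) + aa^2) := by
        funext p
        rw [haadef]
        ring
      have i1 : Integrable (fun p : E × E × E =>
          (if |h p.1 p.2.1| ≤ M then h p.1 p.2.1 else 0) *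
          (if |h p.1 p.2.2| ≤ M then h p.1 p.2.2 else 0)
          + aa * (if |h p.1 p.2.1| ≤ M then h p.1 p.2.1 else 0)) (μ.prod (μ.prod μ)) :=
        hXYint.add (hXint.const_mul aa)
      have i2 : Integrable (fun p : E × E × E =>
          aa * (if |h p.1 p.2.2| ≤ M then h p.1 p.2.2 else 0) + aa^2) (μ.prod (μ.prod μ)) :=
        (hYint.const_mul aa).add (integrable_const (aa^2))
      rw [e, integral_add i1 i2, integral_add hXYint (hXint.const_mul aa),
        integral_add (hYint.const_mul aa) (integrable_const (aa^2)),
        integral_const_mul, integral_const_mul, hmarg1, hmarg2, integral_const]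
      simp only [measure_univ, probReal_univ, smul_eq_mul, one_mul]
      ring
    have hc := hcorr M M hM0 hM0
    rw [hexp] at hc
    set T := ∫ p : E × E × E,
        (if |h p.1 p.2.1| ≤ M then h p.1 p.2.1 else 0) *
        (if |h p.1 p.2.2| ≤ M then h p.1 p.2.2 else 0) ∂(μ.prod (μ.prod μ)) with hTdef
    -- the corr-bound term
    have hMe1 : C₀' * (M*M) ^ (-θ') ≤ C₀' * M ^ (2 - 3*β/2) := by
      have e1 : (M*M) ^ (-θ') = M ^ (-θ' + -θ') := by
        rw [Real.mul_rpow hM0.le hM0.le, Real.rpow_add hM0]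
      rw [e1]
      exact mul_le_mul_of_nonneg_left
        (Real.rpow_le_rpow_of_exponent_le hM (by linarith)) hC₀'.le
    -- the square term
    have hMe2 : (m + aa)^2 ≤ (K + K/(β-1) + Ka)^2 * M ^ (2 - 3*β/2) := by
      have e2 : ((K + K/(β-1) + Ka) * M ^ (1-β))^2
          = (K + K/(β-1) + Ka)^2 * (M ^ (1-β))^2 := by ring
      have e3 : (M ^ (1-β))^2 = M ^ (2 - 2*β) := by
        rw [← Real.rpow_natCast (M ^ (1-β)) 2, ← Real.rpow_mul hM0.le]
        congr 1
        push_cast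
        ring
      have e4 : M ^ (2 - 2*β) ≤ M ^ (2 - 3*β/2) :=
        Real.rpow_le_rpow_of_exponent_le hM (by linarith)
      calc (m + aa)^2 = |m + aa|^2 := (sq_abs _).symm
        _ ≤ ((K + K/(β-1) + Ka) * M ^ (1-β))^2 := pow_le_pow_left₀ (abs_nonneg _) hma 2
        _ = (K + K/(β-1) + Ka)^2 * (M ^ (1-β))^2 := e2
        _ = (K + K/(β-1) + Ka)^2 * M ^ (2 - 2*β) := by rw [e3]
        _ ≤ (K + K/(β-1) + Ka)^2 * M ^ (2 - 3*β/2) :=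
            mul_le_mul_of_nonneg_left e4 (sq_nonneg _)
    have hfinal : |T - m^2| ≤ |T + aa*m + aa*m + aa^2| + (m + aa)^2 := by
      have e : T - m^2 = (T + aa*m + aa*m + aa^2) - (m + aa)^2 := by ring
      rw [e, sub_eq_add_neg]
      refine le_trans (abs_add_le _ _) ?_
      rw [abs_neg, abs_of_nonneg (sq_nonneg (m + aa))]
    have hMnn : (0:ℝ) ≤ M ^ (2 - 3*β/2) := Real.rpow_nonneg hM0.le _
    calc |T - m^2| ≤ |T + aa*m + aa*m + aa^2| + (m + aa)^2 := hfinal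
      _ ≤ C₀' * (M*M) ^ (-θ') + (m + aa)^2 := add_le_add_left hc _
      _ ≤ C₀' * M ^ (2 - 3*β/2) + (K + K/(β-1) + Ka)^2 * M ^ (2 - 3*β/2) :=
          add_le_add hMe1 hMe2
      _ = (C₀' + (K + K/(β-1) + Ka)^2) * M ^ (2 - 3*β/2) := by ring
      _ ≤ (C₀' + (K + K/(β-1) + Ka)^2 + 1) * M ^ (2 - 3*β/2) :=
          mul_le_mul_of_nonneg_right (by linarith) hMnn
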